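/- Let (X,μ) be a measure space, E ⊆ X measurable with 0 < μ(E) < ∞, and u : E → [-∞,∞] measurable and finite a.e. Then for every bounded variable exponent p on X and every c ∈ ℝ: |m_u(E) − c| ≤ max{2, (2/μ(E))^{1/p_E^-}} · ‖u − c‖_{L^{p(·)}(E)}, where m_u(E) is the median of u on E. -/

import Mathlib

open MeasureTheory Metric ENNReal

noncomputable section

/-- The semi-modular `∫ f(x)^{p(x)} dμ` of an `ℝ≥0∞`-valued function. -/
def modE {X : Type*} [MeasurableSpace X] (μ : Measure X) (p : X → ℝ) (f : X → ℝ≥0∞) : ℝ≥0∞ :=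
  ∫⁻ x, f x ^ p x ∂μ

/-- The Luxemburg quasi-norm associated to the variable exponent `p`. -/
def luxE {X : Type*} [MeasurableSpace X] (μ : Measure X) (p : X → ℝ) (f : X → ℝ≥0∞) : ℝ≥0∞ :=
  sInf {l : ℝ≥0∞ | 0 < l ∧ l ≠ ⊤ ∧ modE μ p (fun x => f x / l) ≤ 1}

/-- The Luxemburg quasi-norm of a real-valued function. -/
def luxR {X : Type*} [MeasurableSpace X] (μ : Measure X) (p : X → ℝ) (u : X → ℝ) : ℝ≥0∞ :=
  luxE μ p (fun x => (‖u x‖₊ : ℝ≥0∞))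

/-- `g` is a scalar `s(·)`-gradient of `u` on the set `E`. -/
def IsSGradOn {X : Type*} [MeasurableSpace X] [PseudoMetricSpace X] (μ : Measure X)
    (E : Set X) (s : X → ℝ) (u : X → ℝ) (g : X → ℝ≥0∞) : Prop :=
  Measurable g ∧ ∃ N : Set X, N ⊆ E ∧ μ N = 0 ∧ ∀ x ∈ E \ N, ∀ y ∈ E \ N,
    ENNReal.ofReal |u x - u y| ≤
      ENNReal.ofReal (dist x y ^ s x) * g x + ENNReal.ofReal (dist x y ^ s y) * g y

/-- `{g k}` is a vector (fractional) `s(·)`-gradient of `u` on the set `E`. -/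
def IsVGradOn {X : Type*} [MeasurableSpace X] [PseudoMetricSpace X] (μ : Measure X)
    (E : Set X) (s : X → ℝ) (u : X → ℝ) (g : ℤ → X → ℝ≥0∞) : Prop :=
  (∀ k, Measurable (g k)) ∧ ∃ N : Set X, N ⊆ E ∧ μ N = 0 ∧
    ∀ x ∈ E \ N, ∀ y ∈ E \ N, ∀ k : ℤ,
      (2 : ℝ) ^ (-(k : ℝ) - 1) ≤ dist x y → dist x y < (2 : ℝ) ^ (-(k : ℝ)) →
      ENNReal.ofReal |u x - u y| ≤
        ENNReal.ofReal (dist x y ^ s x) * g k x + ENNReal.ofReal (dist x y ^ s y) * g k y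

/-- Pointwise `ℓ^{q}`-norm of a sequence, `q ∈ (0,∞]`. -/
def seqNormE (q : ℝ≥0∞) (v : ℤ → ℝ≥0∞) : ℝ≥0∞ :=
  if q = ⊤ then ⨆ k, v k else (∑' k, v k ^ q.toReal) ^ (1 / q.toReal)

/-- The mixed `L^{p(·)}(ℓ^{q(·)})` quasi-norm. -/
def LpEllNorm {X : Type*} [MeasurableSpace X] (μ : Measure X) (p : X → ℝ) (q : X → ℝ≥0∞)
    (g : ℤ → X → ℝ≥0∞) : ℝ≥0∞ :=
  luxE μ p (fun x => seqNormE (q x) (fun k => g k x))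

/-- The semi-modular of the mixed `ℓ^{q(·)}(L^{p(·)})` space. -/
def ellLpMod {X : Type*} [MeasurableSpace X] (μ : Measure X) (p : X → ℝ) (q : X → ℝ≥0∞)
    (g : ℤ → X → ℝ≥0∞) : ℝ≥0∞ :=
  ∑' k : ℤ, sInf {l : ℝ≥0∞ | 0 < l ∧ l ≠ ⊤ ∧
    modE μ p (fun x => g k x / l ^ (1 / q x).toReal) ≤ 1}

/-- The mixed `ℓ^{q(·)}(L^{p(·)})` quasi-norm. -/
def ellLpNorm {X : Type*} [MeasurableSpace X] (μ : Measure X) (p : X → ℝ) (q : X → ℝ≥0∞)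
    (g : ℤ → X → ℝ≥0∞) : ℝ≥0∞ :=
  sInf {l : ℝ≥0∞ | 0 < l ∧ l ≠ ⊤ ∧ ellLpMod μ p q (fun k x => g k x / l) ≤ 1}

/-- Quasi-seminorm of the homogeneous variable Hajłasz–Sobolev space `Ṁ^{s(·),p(·)}(E)`. -/
def MNormOn {X : Type*} [MeasurableSpace X] [PseudoMetricSpace X] (μ : Measure X)
    (E : Set X) (p s : X → ℝ) (u : X → ℝ) : ℝ≥0∞ :=
  sInf ((fun g => luxE (μ.restrict E) p g) '' {g | IsSGradOn μ E s u g})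

/-- Quasi-seminorm of the homogeneous Hajłasz–Triebel–Lizorkin space `Ṁ^{s(·)}_{p(·),q(·)}(E)`. -/
def TLNormOn {X : Type*} [MeasurableSpace X] [PseudoMetricSpace X] (μ : Measure X)
    (E : Set X) (p : X → ℝ) (q : X → ℝ≥0∞) (s : X → ℝ) (u : X → ℝ) : ℝ≥0∞ :=
  sInf ((fun g => LpEllNorm (μ.restrict E) p q g) '' {g | IsVGradOn μ E s u g})

/-- Quasi-seminorm of the homogeneous Hajłasz–Besov space `Ṅ^{s(·)}_{p(·),q(·)}(E)`. -/
def BNormOn {X : Type*} [MeasurableSpace X] [PseudoMetricSpace X] (μ : Measure X)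
    (E : Set X) (p : X → ℝ) (q : X → ℝ≥0∞) (s : X → ℝ) (u : X → ℝ) : ℝ≥0∞ :=
  sInf ((fun g => ellLpNorm (μ.restrict E) p q g) '' {g | IsVGradOn μ E s u g})


private lemma essInf_pos_bound' {X : Type*} [MeasurableSpace X] (μ : Measure X) (p : X → ℝ)
    (hp : 0 < essInf p μ) : ∃ a : ℝ, 0 < a ∧ ∀ᵐ x ∂μ, a ≤ p x := by
  have h : essInf p μ = sSup {a : ℝ | ∀ᵐ x ∂μ, a ≤ p x} := by
    rw [essInf_eq_sSup]; congr 1; ext a; simp [MeasureTheory.ae_iff, not_le]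
  set T := {a : ℝ | ∀ᵐ x ∂μ, a ≤ p x} with hT
  have hne : T.Nonempty := by
    by_contra hc
    rw [Set.not_nonempty_iff_eq_empty] at hc
    rw [h, hc, Real.sSup_empty] at hp; exact lt_irrefl 0 hp
  have hbdd : BddAbove T := by
    by_contra hc
    rw [h, Real.sSup_of_not_bddAbove hc] at hp; exact lt_irrefl 0 hp
  obtain ⟨a, haT, ha⟩ := exists_lt_of_lt_csSup hne (h ▸ hp)
  exact ⟨a, ha, haT⟩

private lemma ereal_cases (z : EReal) : z = ⊥ ∨ z = ⊤ ∨ ∃ r : ℝ, z = (r : EReal) := by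
  induction z using EReal.rec with
  | bot => exact Or.inl rfl
  | coe r => exact Or.inr (Or.inr ⟨r, rfl⟩)
  | top => exact Or.inr (Or.inl rfl)

/-- Median estimate: for a measurable `u : E → [-∞,∞]` finite a.e. on a set of positive finite
measure, `|m_u(E) - c| ≤ max{2, (2/μ(E))^{1/p_E^-}} ‖u - c‖_{L^{p(·)}(E)}` for every bounded
variable exponent `p` and every `c ∈ ℝ`, where `m_u(E)` is the median of `u` on `E`. -/
theorem median_le_luxNorm {X : Type*} [MeasurableSpace X] (μ : Measure X)
    (E : Set X) (hE : MeasurableSet E) (hE0 : 0 < μ E) (hE1 : μ E < ⊤)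
    (u : X → EReal) (hu : Measurable u)
    (hfin : ∀ᵐ x ∂μ.restrict E, u x ≠ ⊤ ∧ u x ≠ ⊥)
    (p : X → ℝ) (hp : 0 < essInf p μ) (hpb : ∃ C : ℝ, ∀ᵐ x ∂μ, p x ≤ C)
    (c : ℝ) :
    ENNReal.ofReal |sSup {t : ℝ | μ {x ∈ E | u x < (t : EReal)} ≤ μ E / 2} - c| ≤
      max 2 (ENNReal.ofReal ((2 / (μ E).toReal) ^ (1 / essInf p (μ.restrict E)))) *
        luxR (μ.restrict E) p (fun x => (u x).toReal - c) := by
  classical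
  obtain ⟨a, ha0, haae⟩ := essInf_pos_bound' μ p hp
  obtain ⟨C, hC⟩ := hpb
  have hres : μ.restrict E ≤ μ := Measure.restrict_le_self
  have haν : ∀ᵐ x ∂μ.restrict E, a ≤ p x := haae.filter_mono (ae_mono hres)
  have hCν : ∀ᵐ x ∂μ.restrict E, p x ≤ C := hC.filter_mono (ae_mono hres)
  have hν0 : μ.restrict E ≠ 0 := by
    intro h
    have h2 : μ.restrict E Set.univ = 0 := by rw [h]; rfl
    rw [Measure.restrict_apply_univ] at h2
    exact absurd h2 hE0.ne'
  have hνbot : (ae (μ.restrict E)).NeBot := ae_neBot.2 hν0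
  set a₀ := essInf p (μ.restrict E) with ha₀def
  have ha₀ : 0 < a₀ := lt_of_lt_of_le ha0 <| by
    refine Filter.le_liminf_of_le ?_ (by simpa [Filter.eventually_map] using haν)
    exact Filter.IsBoundedUnder.isCoboundedUnder_ge ⟨C, by simpa [Filter.eventually_map] using hCν⟩
  have ha₀ae : ∀ᵐ x ∂μ.restrict E, a₀ ≤ p x :=
    ae_essInf_le ⟨a, by simpa [Filter.eventually_map] using haν⟩
  -- basic facts about μ E / 2
  have hEhalf_lt : μ E / 2 < μ E := ENNReal.half_lt_self hE0.ne' hE1.ne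
  have hEhalf_pos : 0 < μ E / 2 := ENNReal.half_pos hE0.ne'
  -- the median set
  set S := {t : ℝ | μ {x ∈ E | u x < (t : EReal)} ≤ μ E / 2} with hSdef
  have hmeas : ∀ t : ℝ, MeasurableSet {x ∈ E | u x < (t : EReal)} :=
    fun t => hE.inter (hu measurableSet_Iio)
  have hmono : ∀ s t : ℝ, s ≤ t →
      μ {x ∈ E | u x < (s : EReal)} ≤ μ {x ∈ E | u x < (t : EReal)} := by
    intro s t hst
    apply measure_mono
    intro x hx
    exact ⟨hx.1, lt_of_lt_of_le hx.2 (EReal.coe_le_coe_iff.2 hst)⟩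
  have hdown : ∀ s t : ℝ, s ≤ t → t ∈ S → s ∈ S :=
    fun s t hst ht => le_trans (hmono s t hst) ht
  -- null sets coming from a.e. finiteness
  have hnull : μ ({x | ¬(u x ≠ ⊤ ∧ u x ≠ ⊥)} ∩ E) = 0 := by
    have h := (MeasureTheory.ae_iff).mp hfin
    rwa [Measure.restrict_apply' hE] at h
  have hbotnull : μ {x ∈ E | u x = ⊥} = 0 := by
    refine measure_mono_null ?_ hnull
    intro x hx
    simp only [Set.mem_inter_iff, Set.mem_setOf_eq] at hx ⊢
    exact ⟨fun h => h.2 hx.2, hx.1⟩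
  have htopnull : μ {x ∈ E | u x = ⊤} = 0 := by
    refine measure_mono_null ?_ hnull
    intro x hx
    simp only [Set.mem_inter_iff, Set.mem_setOf_eq] at hx ⊢
    exact ⟨fun h => h.1 hx.2, hx.1⟩
  -- S is nonempty
  have hSne : S.Nonempty := by
    have hBanti : Antitone (fun n : ℕ => {x ∈ E | u x < ((-(n : ℝ) : ℝ) : EReal)}) := by
      intro i j hij x hx
      simp only [Set.mem_setOf_eq] at hx ⊢
      refine ⟨hx.1, lt_of_lt_of_le hx.2 (EReal.coe_le_coe_iff.2 ?_)⟩
      have h2 : (i : ℝ) ≤ (j : ℝ) := Nat.cast_le.2 hij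
      linarith
    have hint : (⋂ n : ℕ, {x ∈ E | u x < ((-(n : ℝ) : ℝ) : EReal)}) ⊆ {x ∈ E | u x = ⊥} := by
      intro x hx
      simp only [Set.mem_iInter, Set.mem_setOf_eq] at hx ⊢
      refine ⟨(hx 0).1, ?_⟩
      rcases ereal_cases (u x) with hz | hz | ⟨r, hz⟩
      · exact hz
      · exfalso
        have h2 := (hx 0).2
        rw [hz] at h2
        exact absurd h2 (by simp)
      · exfalso
        obtain ⟨n, hn⟩ := exists_nat_gt (-r)
        have h2 := (hx n).2
        rw [hz, EReal.coe_lt_coe_iff] at h2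
        linarith
    have hcont : μ (⋂ n : ℕ, {x ∈ E | u x < ((-(n : ℝ) : ℝ) : EReal)})
        = ⨅ n : ℕ, μ {x ∈ E | u x < ((-(n : ℝ) : ℝ) : EReal)} :=
      hBanti.measure_iInter (fun n => (hmeas _).nullMeasurableSet)
        ⟨0, (lt_of_le_of_lt (measure_mono (fun x hx => hx.1)) hE1).ne⟩
    have h0 : (⨅ n : ℕ, μ {x ∈ E | u x < ((-(n : ℝ) : ℝ) : EReal)}) = 0 := by
      rw [← hcont]
      exact measure_mono_null hint hbotnull
    have hex : ∃ n : ℕ, μ {x ∈ E | u x < ((-(n : ℝ) : ℝ) : EReal)} < μ E / 2 := by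
      rw [← iInf_lt_iff, h0]; exact hEhalf_pos
    obtain ⟨n, hn⟩ := hex
    exact ⟨-(n : ℝ), hn.le⟩
  -- S is bounded above
  have hSbdd : BddAbove S := by
    have hBmono : Monotone (fun n : ℕ => {x ∈ E | u x < ((n : ℝ) : EReal)}) := by
      intro i j hij x hx
      simp only [Set.mem_setOf_eq] at hx ⊢
      exact ⟨hx.1, lt_of_lt_of_le hx.2 (EReal.coe_le_coe_iff.2 (Nat.cast_le.2 hij))⟩
    have hun : {x | x ∈ E ∧ u x ≠ ⊤} ⊆ ⋃ n : ℕ, {x ∈ E | u x < ((n : ℝ) : EReal)} := by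
      intro x hx
      simp only [Set.mem_iUnion, Set.mem_setOf_eq]
      rcases ereal_cases (u x) with hz | hz | ⟨r, hz⟩
      · exact ⟨0, hx.1, by rw [hz]; exact EReal.bot_lt_coe _⟩
      · exact absurd hz hx.2
      · obtain ⟨n, hn⟩ := exists_nat_gt r
        exact ⟨n, hx.1, by rw [hz]; exact EReal.coe_lt_coe_iff.2 hn⟩
    have hmuE : μ E ≤ ⨆ n : ℕ, μ {x ∈ E | u x < ((n : ℝ) : EReal)} := by
      rw [← hBmono.measure_iUnion]
      calc μ E ≤ μ ({x | x ∈ E ∧ u x ≠ ⊤} ∪ {x ∈ E | u x = ⊤}) := by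
            apply measure_mono
            intro x hx
            by_cases h : u x = ⊤
            · exact Or.inr ⟨hx, h⟩
            · exact Or.inl ⟨hx, h⟩
        _ ≤ μ {x | x ∈ E ∧ u x ≠ ⊤} + μ {x ∈ E | u x = ⊤} := measure_union_le _ _
        _ = μ {x | x ∈ E ∧ u x ≠ ⊤} := by rw [htopnull, add_zero]
        _ ≤ μ (⋃ n : ℕ, {x ∈ E | u x < ((n : ℝ) : EReal)}) := measure_mono hun
    have hex : ∃ n : ℕ, μ E / 2 < μ {x ∈ E | u x < ((n : ℝ) : EReal)} := by
      rw [← lt_iSup_iff]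
      exact lt_of_lt_of_le hEhalf_lt hmuE
    obtain ⟨n, hn⟩ := hex
    refine ⟨(n : ℝ), fun t ht => ?_⟩
    by_contra hc
    push_neg at hc
    exact absurd (hdown (n : ℝ) t hc.le ht) (not_le.2 hn)
  set m := sSup S with hmdef
  -- m belongs to S (continuity from below)
  have hmS : μ {x ∈ E | u x < (m : EReal)} ≤ μ E / 2 := by
    have hBmono : Monotone (fun n : ℕ => {x ∈ E | u x < ((m - 1/((n:ℝ)+1) : ℝ) : EReal)}) := by
      intro i j hij x hx
      simp only [Set.mem_setOf_eq] at hx ⊢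
      refine ⟨hx.1, lt_of_lt_of_le hx.2 (EReal.coe_le_coe_iff.2 ?_)⟩
      have h1 : (1:ℝ)/((j:ℝ)+1) ≤ 1/((i:ℝ)+1) := by
        apply one_div_le_one_div_of_le
        · positivity
        · have : (i:ℝ) ≤ (j:ℝ) := Nat.cast_le.2 hij
          linarith
      linarith
    have hUn : {x ∈ E | u x < (m : EReal)}
        = ⋃ n : ℕ, {x ∈ E | u x < ((m - 1/((n:ℝ)+1) : ℝ) : EReal)} := by
      ext x
      simp only [Set.mem_iUnion, Set.mem_setOf_eq]
      constructor
      · rintro ⟨hxE, hxlt⟩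
        rcases ereal_cases (u x) with hz | hz | ⟨r, hz⟩
        · exact ⟨0, hxE, by rw [hz]; exact EReal.bot_lt_coe _⟩
        · rw [hz] at hxlt; exact absurd hxlt (by simp)
        · rw [hz, EReal.coe_lt_coe_iff] at hxlt
          obtain ⟨n, hn⟩ := exists_nat_one_div_lt (sub_pos.2 hxlt)
          refine ⟨n, hxE, ?_⟩
          rw [hz]
          exact EReal.coe_lt_coe_iff.2 (by linarith)
      · rintro ⟨n, hxE, hxlt⟩
        refine ⟨hxE, lt_of_lt_of_le hxlt (EReal.coe_le_coe_iff.2 ?_)⟩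
        have : (0:ℝ) < 1/((n:ℝ)+1) := by positivity
        linarith
    rw [hUn, hBmono.measure_iUnion]
    refine iSup_le fun n => ?_
    have h2 : (0:ℝ) < 1/((n:ℝ)+1) := by positivity
    obtain ⟨t, htS, ht⟩ := exists_lt_of_lt_csSup hSne (by linarith : m - 1/((n:ℝ)+1) < m)
    exact hdown _ t ht.le htS
  -- strict bound above the median
  have hute : ∀ t : ℝ, m < t → μ E / 2 < μ {x ∈ E | u x < (t : EReal)} := by
    intro t hmt
    by_contra hc
    push_neg at hc
    exact absurd (le_csSup hSbdd hc) (not_le.2 hmt)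
  -- a set of measure at least half where the deviation is at least |m - c|
  have key : ∃ A : Set X, MeasurableSet A ∧ A ⊆ E ∧ μ E / 2 ≤ μ A ∧
      (∀ᵐ x ∂μ.restrict E, x ∈ A → ENNReal.ofReal |m - c| ≤ ((‖(u x).toReal - c‖₊ : ℝ≥0∞))) := by
    have hhalf_ne_top : μ E / 2 ≠ ⊤ := (lt_of_le_of_lt ENNReal.half_le_self hE1).ne
    rcases le_or_gt c m with hcm | hmc
    · refine ⟨{x ∈ E | (m : EReal) ≤ u x}, hE.inter (hu measurableSet_Ici),
        fun x hx => hx.1, ?_, ?_⟩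
      · have hsplit : μ E ≤ μ {x ∈ E | u x < (m : EReal)} + μ {x ∈ E | (m : EReal) ≤ u x} := by
          refine le_trans (measure_mono ?_) (measure_union_le _ _)
          intro x hx
          rcases lt_or_ge (u x) (m : EReal) with h | h
          · exact Or.inl ⟨hx, h⟩
          · exact Or.inr ⟨hx, h⟩
        have h4 : μ E / 2 + μ E / 2 ≤ μ E / 2 + μ {x ∈ E | (m : EReal) ≤ u x} := by
          rw [ENNReal.add_halves]
          exact le_trans hsplit (add_le_add hmS le_rfl)
        exact (ENNReal.add_le_add_iff_left hhalf_ne_top).1 h4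
      · filter_upwards [hfin] with x hxf hxA
        have hxm : (m : EReal) ≤ u x := hxA.2
        rcases ereal_cases (u x) with hz | hz | ⟨r, hz⟩
        · rw [hz, le_bot_iff] at hxm
          exact absurd hxm (EReal.coe_ne_bot m)
        · exact absurd hz hxf.1
        · have hr : m ≤ r := by
            rw [hz] at hxm; exact EReal.coe_le_coe_iff.1 hxm
          have htr : (u x).toReal = r := by rw [hz]; exact EReal.toReal_coe r
          rw [htr, ← enorm_eq_nnnorm, Real.enorm_eq_ofReal_abs]
          apply ENNReal.ofReal_le_ofReal
          rw [abs_of_nonneg (sub_nonneg.2 hcm)]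
          exact le_trans (by linarith) (le_abs_self (r - c))
    · refine ⟨{x ∈ E | u x ≤ (m : EReal)}, hE.inter (hu measurableSet_Iic),
        fun x hx => hx.1, ?_, ?_⟩
      · have hBanti : Antitone (fun n : ℕ => {x ∈ E | u x < ((m + 1/((n:ℝ)+1) : ℝ) : EReal)}) := by
          intro i j hij x hx
          simp only [Set.mem_setOf_eq] at hx ⊢
          refine ⟨hx.1, lt_of_lt_of_le hx.2 (EReal.coe_le_coe_iff.2 ?_)⟩
          have h1 : (1:ℝ)/((j:ℝ)+1) ≤ 1/((i:ℝ)+1) := by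
            apply one_div_le_one_div_of_le
            · positivity
            · have : (i:ℝ) ≤ (j:ℝ) := Nat.cast_le.2 hij
              linarith
          linarith
        have hInt : (⋂ n : ℕ, {x ∈ E | u x < ((m + 1/((n:ℝ)+1) : ℝ) : EReal)})
            = {x ∈ E | u x ≤ (m : EReal)} := by
          ext x
          simp only [Set.mem_iInter, Set.mem_setOf_eq]
          constructor
          · intro hx
            refine ⟨(hx 0).1, ?_⟩
            rcases ereal_cases (u x) with hz | hz | ⟨r, hz⟩
            · rw [hz]; exact bot_le
            · have h2 := (hx 0).2
              rw [hz] at h2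
              exact absurd h2 (by simp)
            · rw [hz, EReal.coe_le_coe_iff]
              by_contra hc
              push_neg at hc
              obtain ⟨n, hn⟩ := exists_nat_one_div_lt (sub_pos.2 hc)
              have h2 := (hx n).2
              rw [hz, EReal.coe_lt_coe_iff] at h2
              linarith
          · intro hx n
            refine ⟨hx.1, lt_of_le_of_lt hx.2 (EReal.coe_lt_coe_iff.2 ?_)⟩
            have : (0:ℝ) < 1/((n:ℝ)+1) := by positivity
            linarith
        have hmeasInt := hBanti.measure_iInter
          (fun n => (hE.inter (hu measurableSet_Iio)).nullMeasurableSet)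
          ⟨0, (lt_of_le_of_lt (measure_mono (fun x hx => hx.1)) hE1).ne⟩
        rw [← hInt, hmeasInt]
        refine le_iInf fun n => le_of_lt (hute _ ?_)
        have h5 : (0:ℝ) < 1/((n:ℝ)+1) := by positivity
        linarith
      · filter_upwards [hfin] with x hxf hxA
        have hxm : u x ≤ (m : EReal) := hxA.2
        rcases ereal_cases (u x) with hz | hz | ⟨r, hz⟩
        · exact absurd hz hxf.2
        · exact absurd hz hxf.1
        · have hr : r ≤ m := by
            rw [hz] at hxm; exact EReal.coe_le_coe_iff.1 hxm
          have htr : (u x).toReal = r := by rw [hz]; exact EReal.toReal_coe r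
          rw [htr, ← enorm_eq_nnnorm, Real.enorm_eq_ofReal_abs]
          apply ENNReal.ofReal_le_ofReal
          rw [abs_of_neg (by linarith : m - c < 0)]
          rw [abs_sub_comm]
          exact le_trans (by linarith) (le_abs_self (c - r))
  obtain ⟨A, hA, hAE, hAμ, hlow⟩ := key
  -- the constant
  have hM2 : (2:ℝ≥0∞) ≤ max 2 (ENNReal.ofReal ((2 / (μ E).toReal) ^ (1 / a₀))) := le_max_left _ _
  have hM0 : max 2 (ENNReal.ofReal ((2 / (μ E).toReal) ^ (1 / a₀))) ≠ 0 :=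
    (lt_of_lt_of_le two_pos hM2).ne'
  have hMt : max 2 (ENNReal.ofReal ((2 / (μ E).toReal) ^ (1 / a₀))) ≠ ⊤ :=
    (max_lt (by norm_num) ENNReal.ofReal_lt_top).ne
  -- the key estimate for each admissible l
  have key2 : ∀ l : ℝ≥0∞, 0 < l → l ≠ ⊤ →
      modE (μ.restrict E) p (fun x => ((‖(u x).toReal - c‖₊ : ℝ≥0∞)) / l) ≤ 1 →
      ENNReal.ofReal |m - c| ≤ max 2 (ENNReal.ofReal ((2 / (μ E).toReal) ^ (1 / a₀))) * l := by
    intro l hl0 hlt hmod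
    rcases le_or_gt (ENNReal.ofReal |m - c|) l with hcase | hcase
    · exact hcase.trans (le_mul_of_one_le_left zero_le (le_trans one_le_two hM2))
    set b := ENNReal.ofReal |m - c| / l with hbdef
    have hbl : b * l = ENNReal.ofReal |m - c| := ENNReal.div_mul_cancel hl0.ne' hlt
    have hb1 : 1 < b := by
      by_contra hb
      push_neg at hb
      have h6 : ENNReal.ofReal |m - c| ≤ l := by
        rw [← hbl]
        exact le_trans (by gcongr : b * l ≤ 1 * l) (by rw [one_mul])
      exact absurd h6 (not_le.2 hcase)
    have hνA : μ.restrict E A = μ A := by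
      rw [Measure.restrict_apply' hE, Set.inter_eq_self_of_subset_left hAE]
    have hchain : μ E / 2 * b ^ a₀ ≤ 1 := by
      calc μ E / 2 * b ^ a₀ ≤ μ A * b ^ a₀ := by gcongr
        _ = ∫⁻ _ in A, b ^ a₀ ∂(μ.restrict E) := by
            rw [setLIntegral_const, hνA, mul_comm]
        _ ≤ ∫⁻ x in A, ((‖(u x).toReal - c‖₊ : ℝ≥0∞) / l) ^ p x ∂(μ.restrict E) := by
            refine lintegral_mono_ae ?_
            have h1 : ∀ᵐ x ∂(μ.restrict E).restrict A, a₀ ≤ p x := ae_restrict_of_ae ha₀ae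
            have h2 := ae_restrict_of_ae (μ := μ.restrict E) (s := A) hlow
            have h3 : ∀ᵐ x ∂(μ.restrict E).restrict A, x ∈ A := ae_restrict_mem hA
            filter_upwards [h1, h2, h3] with x hx1 hx2 hx3
            have hg : b ≤ (‖(u x).toReal - c‖₊ : ℝ≥0∞) / l :=
              ENNReal.div_le_div_right (hx2 hx3) l
            calc b ^ a₀ ≤ b ^ p x := ENNReal.rpow_le_rpow_of_exponent_le hb1.le hx1
              _ ≤ _ := ENNReal.rpow_le_rpow hg (le_trans ha₀.le hx1)
        _ ≤ ∫⁻ x, ((‖(u x).toReal - c‖₊ : ℝ≥0∞) / l) ^ p x ∂(μ.restrict E) :=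
            setLIntegral_le_lintegral _ _
        _ ≤ 1 := hmod
    have h2E : (2:ℝ≥0∞) * (μ E / 2) = μ E := ENNReal.mul_div_cancel two_ne_zero ENNReal.ofNat_ne_top
    have hb2 : b ^ a₀ ≤ 2 / μ E := by
      rw [ENNReal.le_div_iff_mul_le (Or.inl hE0.ne') (Or.inl hE1.ne)]
      calc b ^ a₀ * μ E = 2 * (μ E / 2 * b ^ a₀) := by
            rw [← mul_assoc, h2E, mul_comm]
        _ ≤ 2 * 1 := by gcongr
        _ = 2 := mul_one 2
    have hb3 : b ≤ (2 / μ E) ^ (1 / a₀) := by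
      have h7 := ENNReal.rpow_le_rpow hb2 (le_of_lt (by positivity : (0:ℝ) < 1 / a₀))
      rwa [← ENNReal.rpow_mul, mul_one_div_cancel ha₀.ne', ENNReal.rpow_one] at h7
    have htoR : (0:ℝ) < 2 / (μ E).toReal := div_pos two_pos (ENNReal.toReal_pos hE0.ne' hE1.ne)
    have heq : ENNReal.ofReal (2 / (μ E).toReal) = 2 / μ E := by
      rw [ENNReal.ofReal_div_of_pos (ENNReal.toReal_pos hE0.ne' hE1.ne),
        ENNReal.ofReal_toReal hE1.ne]
      norm_num
    have hbM : b ≤ max 2 (ENNReal.ofReal ((2 / (μ E).toReal) ^ (1 / a₀))) := by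
      refine le_trans hb3 (le_trans (le_of_eq ?_) (le_max_right _ _))
      rw [← heq, ENNReal.ofReal_rpow_of_pos htoR]
    rw [← hbl]
    gcongr
  -- conclude via the definition of the Luxemburg quasi-norm
  have hgoal : ENNReal.ofReal |m - c| / max 2 (ENNReal.ofReal ((2 / (μ E).toReal) ^ (1 / a₀)))
      ≤ luxR (μ.restrict E) p (fun x => (u x).toReal - c) := by
    rw [luxR, luxE]
    refine le_sInf ?_
    rintro l ⟨hl0, hlt, hmod⟩
    exact ENNReal.div_le_of_le_mul' (key2 l hl0 hlt hmod)
  have hfinal := (ENNReal.div_le_iff_le_mul (Or.inl hM0) (Or.inl hMt)).1 hgoal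
  rw [mul_comm] at hfinal
  exact hfinal
end
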